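/- Let P be a symmetric convex 2n-gon and let M be a P-polygon with curvature radii r_i (so ΔM_i = r_i·ΔP_i) and support numbers h_i = [M_i, Q_i]. Then r_i = h_i + β_i·∇_i(α·Δh), where α_i = 1/[Q_i,Q_{i+1}], β_i = 1/[P_i,P_{i+1}], i.e., the radii depend linearly on the support function via this explicit formula. -/
import Mathlib


/-- Determinant of the 2×2 matrix with columns `v` and `w`. -/
noncomputable def det2 (v w : ℝ × ℝ) : ℝ := v.1 * w.2 - v.2 * w.1

lemma det2_smul_right (v w : ℝ × ℝ) (s : ℝ) : det2 v (s • w) = s * det2 v w := by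
  simp [det2]; ring

lemma det2_smul_smul (v w : ℝ × ℝ) (s t : ℝ) :
    det2 (s • v) (t • w) = s * t * det2 v w := by
  simp [det2]; ring

lemma det2_add_smul_left (v u w : ℝ × ℝ) (s : ℝ) :
    det2 (v + s • u) w = det2 v w + s * det2 u w := by
  simp [det2]; ring

lemma det2_sub_smul_left (v u w : ℝ × ℝ) (s : ℝ) :
    det2 (v - s • u) w = det2 v w - s * det2 u w := by
  simp [det2]; ring

lemma det2_self (v : ℝ × ℝ) : det2 v v = 0 := by simp [det2]; ring

theorem stmt_4 (n : ℕ) (hn : 0 < n) (P Q M : ℤ → ℝ × ℝ) (α β r h : ℤ → ℝ)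
    (hper : ∀ i, P (i + 2 * n) = P i)
    (hconv : ∀ i, 0 < det2 (P i) (P (i + 1)))
    (hloc : ∀ i, 0 < det2 (P i - P (i - 1)) (P (i + 1) - P i))
    (hsym : ∀ i, P (i + n) = -P i)
    (hβ : ∀ i, β i = (det2 (P i) (P (i + 1)))⁻¹)
    (hQ : ∀ i, Q i = β i • (P (i + 1) - P i))
    (hα : ∀ i, α i = (det2 (Q i) (Q (i + 1)))⁻¹)
    (hM : ∀ i, M (i + 1) - M i = r i • (P (i + 1) - P i))
    (hh : ∀ i, h i = det2 (M i) (Q i)) :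
    ∀ i, r i = h i + β i * (α i * (h (i + 1) - h i) - α (i - 1) * (h i - h (i - 1))) := by
  intro i
  have hi1 : i - 1 + 1 = i := by ring
  have hi2 : i + 1 + 1 = i + 2 := by ring
  have hi3 : i + 1 - 1 = i := by ring
  -- nonzero determinants
  have hB1 : det2 (P (i - 1)) (P i) ≠ 0 := by
    have := hconv (i - 1); rw [hi1] at this; exact ne_of_gt this
  have hB2 : det2 (P i) (P (i + 1)) ≠ 0 := ne_of_gt (hconv i)
  have hB3 : det2 (P (i + 1)) (P (i + 2)) ≠ 0 := by
    have := hconv (i + 1); rw [hi2] at this; exact ne_of_gt this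
  have hD1 : det2 (P i - P (i - 1)) (P (i + 1) - P i) ≠ 0 := ne_of_gt (hloc i)
  have hD2 : det2 (P (i + 1) - P i) (P (i + 2) - P (i + 1)) ≠ 0 := by
    have := hloc (i + 1); rw [hi3, hi2] at this; exact ne_of_gt this
  -- β values
  have hβm : β (i - 1) = (det2 (P (i - 1)) (P i))⁻¹ := by
    have := hβ (i - 1); rwa [hi1] at this
  have hβp : β (i + 1) = (det2 (P (i + 1)) (P (i + 2)))⁻¹ := by
    have := hβ (i + 1); rwa [hi2] at this
  -- Q values
  have hQm : Q (i - 1) = β (i - 1) • (P i - P (i - 1)) := by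
    have := hQ (i - 1); rwa [hi1] at this
  have hQp : Q (i + 1) = β (i + 1) • (P (i + 2) - P (i + 1)) := by
    have := hQ (i + 1); rwa [hi2] at this
  -- M values
  have hM1 : M (i + 1) = M i + r i • (P (i + 1) - P i) := by
    have := hM i
    have : M (i + 1) = M i + (M (i + 1) - M i) := by abel
    rw [this, hM i]
  have hM0 : M (i - 1) = M i - r (i - 1) • (P i - P (i - 1)) := by
    have e := hM (i - 1); rw [hi1] at e
    have : M (i - 1) = M i - (M i - M (i - 1)) := by abel
    rw [this, e]
  -- h values
  have e0 : h i = (det2 (P i) (P (i + 1)))⁻¹ * det2 (M i) (P (i + 1) - P i) := by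
    rw [hh i, hQ i, hβ i, det2_smul_right]
  have em : h (i - 1) = (det2 (P (i - 1)) (P i))⁻¹ * det2 (M i) (P i - P (i - 1)) := by
    rw [hh (i - 1), hM0, hQm, hβm, det2_smul_right, det2_sub_smul_left, det2_self]
    ring
  have ep : h (i + 1) = (det2 (P (i + 1)) (P (i + 2)))⁻¹ *
      (det2 (M i) (P (i + 2) - P (i + 1)) +
        r i * det2 (P (i + 1) - P i) (P (i + 2) - P (i + 1))) := by
    rw [hh (i + 1), hM1, hQp, hβp, det2_smul_right, det2_add_smul_left]
  -- α values
  have ea0 : α i = ((det2 (P i) (P (i + 1)))⁻¹ * (det2 (P (i + 1)) (P (i + 2)))⁻¹ *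
      det2 (P (i + 1) - P i) (P (i + 2) - P (i + 1)))⁻¹ := by
    rw [hα i, hQ i, hQp, det2_smul_smul, hβ i, hβp]
  have eam : α (i - 1) = ((det2 (P (i - 1)) (P i))⁻¹ * (det2 (P i) (P (i + 1)))⁻¹ *
      det2 (P i - P (i - 1)) (P (i + 1) - P i))⁻¹ := by
    have e := hα (i - 1); rw [hi1] at e
    rw [e, hQm, hQ i, det2_smul_smul, hβm, hβ i]
  rw [e0, em, ep, ea0, eam, hβ i]
  field_simp
  simp only [det2, Prod.fst_sub, Prod.snd_sub]
  ring
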